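/- Every self-dual (with respect to the symplectic inner product) additive code over F_{m^2} of length n is equivalent, under symplectic coordinate transformations, to a graph code, i.e., to a code with a generator matrix of the form Γ + ωI where Γ is a symmetric n×n matrix over F_m with zero diagonal. -/

import Mathlib

open scoped BigOperators

/-- The trace map from `F_{p^r}` to the prime field `F_p`, computed inside `F`. -/
def fieldTr {F : Type*} [Field F] (p r : ℕ) (x : F) : F :=
  ∑ i ∈ Finset.range r, x ^ p ^ i

/-- The symplectic (trace) inner product on `(F_m × F_m)^n`. -/
def sympForm {F : Type*} [Field F] (p r : ℕ) {n : ℕ} (u v : Fin n → F × F) : F :=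
  fieldTr p r (∑ i, ((u i).2 * (v i).1 - (v i).2 * (u i).1))

/-- Action of an element of `Sp_2(F_m)` on a coordinate `F_m × F_m ≅ F_{m^2}`. -/
def sl2Apply {F : Type*} [Field F] (M : Matrix.SpecialLinearGroup (Fin 2) F)
    (x : F × F) : F × F :=
  (M.1 0 0 * x.1 + M.1 0 1 * x.2, M.1 1 0 * x.1 + M.1 1 1 * x.2)

/-- Every self-dual additive code over `F_{m^2}` of length `n` is equivalent, under a
    coordinate permutation combined with per-coordinate symplectic transformations, to a
    graph code: a code generated by `(Γ | I)`, i.e. `Γ + ωI`, with `Γ` symmetric with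
    zero diagonal. -/
lemma aux_tr_ne_zero {F : Type*} [Field F] [Fintype F] (p r : ℕ) (hp : p.Prime) (hr : 0 < r)
    (hF : Fintype.card F = p ^ r) : ∃ y : F, fieldTr p r y ≠ 0 := by
  set f : Polynomial F := ∑ i ∈ Finset.range r, Polynomial.X ^ p ^ i with hf
  have hfne : f ≠ 0 := by
    intro h
    have hc : f.coeff (p ^ (r - 1)) = 1 := by
      rw [hf, Polynomial.finset_sum_coeff]
      rw [Finset.sum_congr rfl (fun i _ => Polynomial.coeff_X_pow (p ^ i) (p ^ (r-1)))]
      have : ∀ i ∈ Finset.range r, (if p ^ (r-1) = p ^ i then (1:F) else 0)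
          = if i = r - 1 then 1 else 0 := by
        intro i _
        congr 1
        simp only [eq_iff_iff]
        constructor
        · intro h'
          exact (Nat.pow_right_injective hp.two_le h'.symm)
        · intro h'; rw [h']
      rw [Finset.sum_congr rfl this, Finset.sum_ite_eq' (Finset.range r) (r-1)]
      simp [Nat.sub_lt hr Nat.one_pos]
    rw [h] at hc
    simp at hc
  have hdeg : f.natDegree < Cardinal.mk F := by
    have h1 : f.natDegree ≤ p ^ (r - 1) := by
      rw [hf]
      refine le_trans (Polynomial.natDegree_sum_le _ _) ?_
      rw [Finset.fold_max_le]
      constructor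
      · positivity
      · intro i hi
        have hi' := Finset.mem_range.mp hi
        simp only [Function.comp]
        rw [Polynomial.natDegree_X_pow]
        exact Nat.pow_le_pow_right hp.pos (by omega)
    have h2 : p ^ (r - 1) < p ^ r := Nat.pow_lt_pow_right hp.one_lt (by omega)
    have : f.natDegree < Fintype.card F := by omega
    rw [Cardinal.mk_fintype F]
    exact_mod_cast this
  obtain ⟨y, hy⟩ := Polynomial.exists_eval_ne_zero_of_natDegree_lt_card f hfne hdeg
  refine ⟨y, ?_⟩
  rw [fieldTr]
  convert hy using 1
  rw [hf, Polynomial.eval_finset_sum]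
  simp

lemma aux_pivot {F : Type*} [Field F] {n : ℕ} (U : Submodule F (Fin n → F)) :
    ∃ s : Finset (Fin n), (∀ a ∈ U, (∀ i ∈ s, a i = 0) → a = 0) ∧
      (∀ w : Fin n → F, ∃ a ∈ U, ∀ i ∈ s, a i = w i) := by
  classical
  suffices h : ∀ N (s : Finset (Fin n)), s.card ≤ N →
      (∀ a ∈ U, (∀ i ∈ s, a i = 0) → a = 0) →
      ∃ t : Finset (Fin n), (∀ a ∈ U, (∀ i ∈ t, a i = 0) → a = 0) ∧
        (∀ w : Fin n → F, ∃ a ∈ U, ∀ i ∈ t, a i = w i) by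
    refine h n Finset.univ (by simp) ?_
    intro a _ ha
    funext i
    exact ha i (Finset.mem_univ i)
  intro N
  induction N with
  | zero =>
    intro s hs hinj
    refine ⟨s, hinj, ?_⟩
    intro w
    refine ⟨0, U.zero_mem, ?_⟩
    intro i hi
    exact absurd hi (by simp [Finset.card_eq_zero.mp (Nat.le_zero.mp hs)])
  | succ N ih =>
    intro s hs hinj
    by_cases hsur : ∀ w : Fin n → F, ∃ a ∈ U, ∀ i ∈ s, a i = w i
    · exact ⟨s, hinj, hsur⟩
    · push_neg at hsur
      obtain ⟨w, hw⟩ := hsur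
      -- restriction map: zero outside s
      set ρ : (Fin n → F) →ₗ[F] (Fin n → F) :=
        { toFun := fun a i => if i ∈ s then a i else 0
          map_add' := by intro a b; funext i; by_cases h : i ∈ s <;> simp [h]
          map_smul' := by intro c a; funext i; by_cases h : i ∈ s <;> simp [h] } with hρ
      have hwnm : ρ w ∉ U.map ρ := by
        rintro ⟨a, haU, ha⟩
        obtain ⟨i, hi, hne⟩ := hw a haU
        apply hne
        have := congrFun ha i
        simpa [hρ, hi] using this
      obtain ⟨φ, hφw, hφU⟩ := Submodule.exists_dual_map_eq_bot_of_notMem hwnm inferInstance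
      set c : Fin n → F := fun i => φ (fun j => if i = j then 1 else 0) with hc
      have hφ_eq : ∀ x : Fin n → F, φ x = ∑ i, x i * c i := by
        intro x
        rw [LinearMap.pi_apply_eq_sum_univ φ x]
        simp [hc, smul_eq_mul]
      have key : ∀ x : Fin n → F, φ (ρ x) = ∑ i ∈ s, x i * c i := by
        intro x
        calc φ (ρ x) = ∑ i, ρ x i * c i := hφ_eq _
          _ = ∑ i, (if i ∈ s then x i * c i else 0) :=
              Finset.sum_congr rfl (fun i _ => by by_cases h : i ∈ s <;> simp [hρ, h])
          _ = ∑ i ∈ Finset.univ ∩ s, x i * c i := Finset.sum_ite_mem _ _ _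
          _ = ∑ i ∈ s, x i * c i := by rw [Finset.univ_inter]
      have hφU' : ∀ a ∈ U, ∑ i ∈ s, a i * c i = 0 := by
        intro a haU
        rw [← key]
        have hmem : φ (ρ a) ∈ Submodule.map φ (Submodule.map ρ U) :=
          ⟨ρ a, ⟨a, haU, rfl⟩, rfl⟩
        rw [hφU] at hmem
        exact (Submodule.mem_bot F).mp hmem
      have hφwne : ∑ i ∈ s, w i * c i ≠ 0 := by
        rw [← key]
        exact hφw
      -- find j ∈ s with c j ≠ 0
      obtain ⟨j, hjs, hj⟩ : ∃ j ∈ s, c j ≠ 0 := by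
        by_contra h
        push_neg at h
        exact hφwne (Finset.sum_eq_zero fun i hi => by rw [h i hi, mul_zero])
      -- P (s.erase j)
      have hinj' : ∀ a ∈ U, (∀ i ∈ s.erase j, a i = 0) → a = 0 := by
        intro a haU ha
        have haj : a j = 0 := by
          have := hφU' a haU
          rw [← Finset.add_sum_erase s _ hjs] at this
          rw [Finset.sum_eq_zero (fun i hi => by rw [ha i hi, zero_mul]), add_zero] at this
          exact (mul_eq_zero.mp this).resolve_right hj
        refine hinj a haU ?_
        intro i hi
        by_cases h : i = j
        · rw [h]; exact haj
        · exact ha i (Finset.mem_erase.mpr ⟨h, hi⟩)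
      refine ih (s.erase j) ?_ hinj'
      have := Finset.card_erase_of_mem hjs
      omega

theorem stmt9 (p r n m : ℕ) (hp : p.Prime) (hr : 0 < r) (hm : m = p ^ r)
    (F : Type) [Field F] [Fintype F] (hF : Fintype.card F = m)
    (C : Submodule F (Fin n → F × F))
    (hcard : Nat.card C = m ^ n)
    (hsd : ∀ u, u ∈ C ↔ ∀ c ∈ C, sympForm p r u c = 0) :
    ∃ (σ : Equiv.Perm (Fin n)) (S : Fin n → Matrix.SpecialLinearGroup (Fin 2) F)
      (Γ : Matrix (Fin n) (Fin n) F),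
      Γ.IsSymm ∧ (∀ i, Γ i i = 0) ∧
      ∀ u : Fin n → F × F,
        (∃ c ∈ C, (fun i => sl2Apply (S i) (c (σ⁻¹ i))) = u) ↔
        ∃ lam : Fin n → F, u = fun i => ((∑ k, lam k * Γ k i : F), lam i) := by
  classical
  -- isotropy of C for the (untraced) symplectic form
  have hiso : ∀ u ∈ C, ∀ v ∈ C,
      ∑ i, ((u i).2 * (v i).1 - (v i).2 * (u i).1) = 0 := by
    intro u hu v hv
    by_contra ha
    set a : F := ∑ i, ((u i).2 * (v i).1 - (v i).2 * (u i).1) with hadef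
    obtain ⟨y, hy⟩ := aux_tr_ne_zero p r hp hr (by rw [hF, hm])
    set lam : F := y * a⁻¹ with hlam
    have hmem : lam • v ∈ C := C.smul_mem lam hv
    have h0 := (hsd u).mp hu (lam • v) hmem
    apply hy
    rw [sympForm] at h0
    have heq : (∑ i, ((u i).2 * ((lam • v) i).1 - ((lam • v) i).2 * (u i).1)) = lam * a := by
      rw [hadef, Finset.mul_sum]
      refine Finset.sum_congr rfl fun i _ => ?_
      simp only [Pi.smul_apply, Prod.smul_fst, Prod.smul_snd, smul_eq_mul]
      ring
    rw [heq] at h0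
    have : lam * a = y := by
      rw [hlam]
      field_simp
    rwa [this] at h0
  -- component projections
  set pi1 : (Fin n → F × F) →ₗ[F] (Fin n → F) :=
    { toFun := fun u i => (u i).1
      map_add' := fun u v => rfl
      map_smul' := fun c u => rfl } with hpi1
  set pi2 : (Fin n → F × F) →ₗ[F] (Fin n → F) :=
    { toFun := fun u i => (u i).2
      map_add' := fun u v => rfl
      map_smul' := fun c u => rfl } with hpi2
  set U : Submodule F (Fin n → F) := (C ⊓ LinearMap.ker pi2).map pi1 with hU
  obtain ⟨s, hsinj, hssur⟩ := aux_pivot U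
  -- the mixed projection
  set φ : (Fin n → F × F) →ₗ[F] (Fin n → F) :=
    { toFun := fun u i => if i ∈ s then (u i).1 else (u i).2
      map_add' := by intro u v; funext i; by_cases h : i ∈ s <;> simp [h]
      map_smul' := by intro c u; funext i; by_cases h : i ∈ s <;> simp [h] } with hφ
  set ψ : (Fin n → F × F) →ₗ[F] (Fin n → F) :=
    { toFun := fun u i => if i ∈ s then -(u i).2 else (u i).1
      map_add' := by intro u v; funext i; by_cases h : i ∈ s <;> simp [h]; ring
      map_smul' := by intro c u; funext i; by_cases h : i ∈ s <;> simp [h] } with hψ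
  -- injectivity of φ on C
  have hφinj : ∀ c ∈ C, φ c = 0 → c = 0 := by
    intro c hc h0
    have h1 : ∀ i ∈ s, (c i).1 = 0 := by
      intro i hi
      have := congrFun h0 i
      simpa [hφ, hi] using this
    have h2 : ∀ i, i ∉ s → (c i).2 = 0 := by
      intro i hi
      have := congrFun h0 i
      simpa [hφ, hi] using this
    have hv : ∀ j, (c j).2 = 0 := by
      intro j
      by_cases hjs : j ∈ s
      · obtain ⟨a, haU, has⟩ := hssur (Pi.single j 1)
        obtain ⟨k, hk, hka⟩ := haU
        have hk' : k ∈ C ⊓ LinearMap.ker pi2 := hk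
        have hkker : pi2 k = 0 := LinearMap.mem_ker.mp (Submodule.mem_inf.mp hk').2
        have hk2 : ∀ i, (k i).2 = 0 := fun i => congrFun hkker i
        have hB := hiso k (Submodule.mem_inf.mp hk').1 c hc
        have hB' : ∑ i, (c i).2 * a i = 0 := by
          rw [← neg_eq_zero, ← Finset.sum_neg_distrib]
          rw [← hB]
          refine Finset.sum_congr rfl fun i _ => ?_
          rw [hk2 i, ← hka]
          simp [hpi1]
        have hfin : ∑ i, (c i).2 * a i = (c j).2 := by
          have : ∀ i, (c i).2 * a i = if i = j then (c j).2 else 0 := by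
            intro i
            by_cases his : i ∈ s
            · rw [has i his, Pi.single_apply]
              by_cases hij : i = j
              · subst hij; simp
              · simp [hij]
            · rw [h2 i his, zero_mul]
              have : i ≠ j := fun h => his (h ▸ hjs)
              simp [this]
          rw [Finset.sum_congr rfl fun i _ => this i, Finset.sum_ite_eq' Finset.univ j]
          simp
        rw [hfin] at hB'
        exact hB'
      · exact h2 j hjs
    have hpi2c : pi2 c = 0 := funext fun i => hv i
    have hcK : c ∈ C ⊓ LinearMap.ker pi2 :=
      Submodule.mem_inf.mpr ⟨hc, LinearMap.mem_ker.mpr hpi2c⟩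
    have hp1U : pi1 c ∈ U := ⟨c, hcK, rfl⟩
    have hp10 : pi1 c = 0 := by
      refine hsinj _ hp1U ?_
      intro i hi
      exact h1 i hi
    funext i
    have e1 : (c i).1 = 0 := congrFun hp10 i
    have e2 : (c i).2 = 0 := hv i
    exact Prod.ext e1 e2
  -- dimension of C
  have hm2 : 2 ≤ m := by
    rw [hm]
    calc 2 ≤ p := hp.two_le
    _ ≤ p ^ r := Nat.le_self_pow (by omega) p
  letI : Fintype ↥C := Fintype.ofFinite ↥C
  have frC : Module.finrank F ↥C = n := by
    have h1 : Fintype.card ↥C = Fintype.card F ^ Module.finrank F ↥C := Module.card_eq_pow_finrank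
    have h2 : Nat.card ↥C = Fintype.card ↥C := Nat.card_eq_fintype_card
    rw [h2, h1, hF] at hcard
    exact Nat.pow_right_injective hm2 hcard
  -- the bijection f : C → F^n
  set f : ↥C →ₗ[F] (Fin n → F) := φ ∘ₗ C.subtype with hfdef
  have hfinj : Function.Injective f := by
    rw [← LinearMap.ker_eq_bot, LinearMap.ker_eq_bot']
    intro x hx
    have : (x : Fin n → F × F) = 0 := hφinj x x.2 hx
    exact Subtype.ext this
  have hdim : Module.finrank F ↥C = Module.finrank F (Fin n → F) := by
    rw [frC, Module.finrank_fintype_fun_eq_card, Fintype.card_fin]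
  have hfsurj : Function.Surjective f :=
    (LinearMap.injective_iff_surjective_of_finrank_eq_finrank hdim).mp hfinj
  -- basis elements e k
  choose e he using fun k : Fin n => hfsurj (Pi.single k 1)
  set Γ0 : Matrix (Fin n) (Fin n) F := fun k i => ψ (e k : Fin n → F × F) i with hΓ0
  -- symplectic form in terms of φ and ψ
  have hBid : ∀ u v : Fin n → F × F,
      ∑ i, ((u i).2 * (v i).1 - (v i).2 * (u i).1)
        = ∑ i, (φ u i * ψ v i - φ v i * ψ u i) := by
    intro u v
    refine Finset.sum_congr rfl fun i _ => ?_
    by_cases h : i ∈ s <;> simp [hφ, hψ, h] <;> ring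
  -- representation: every c ∈ C is the combination given by φ c
  have hrep : ∀ c : ↥C, (c : Fin n → F × F) = ∑ k, f c k • (e k : Fin n → F × F) := by
    intro c
    have : c = ∑ k, f c k • e k := by
      apply hfinj
      rw [map_sum]
      funext i
      simp only [map_smul, he, Finset.sum_apply, Pi.smul_apply, Pi.single_apply, smul_eq_mul]
      rw [Finset.sum_congr rfl (fun k _ => by rw [mul_ite, mul_one, mul_zero]),
        Finset.sum_ite_eq Finset.univ i]
      simp
    calc (c : Fin n → F × F) = ((∑ k, f c k • e k : ↥C) : Fin n → F × F) := by rw [← this]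
    _ = ∑ k, f c k • (e k : Fin n → F × F) := by
        rw [Submodule.coe_sum]
        simp
  have hψrep : ∀ c : ↥C, ∀ i, ψ (c : Fin n → F × F) i = ∑ k, f c k * Γ0 k i := by
    intro c i
    conv_lhs => rw [hrep c]
    rw [map_sum]
    simp only [map_smul, Finset.sum_apply, Pi.smul_apply, smul_eq_mul, hΓ0]
  -- symmetry of Γ0
  have hΓ0symm : ∀ k l, Γ0 k l = Γ0 l k := by
    intro k l
    have h := hiso (e k) (e k).2 (e l) (e l).2
    rw [hBid] at h
    have hek : φ ((e k : Fin n → F × F)) = Pi.single k 1 := he k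
    have hel : φ ((e l : Fin n → F × F)) = Pi.single l 1 := he l
    rw [hek, hel] at h
    have hsum : ∀ (a : Fin n) (g : Fin n → F),
        ∑ i, (Pi.single a 1 : Fin n → F) i * g i = g a := by
      intro a g
      rw [Finset.sum_congr rfl (fun i _ => by
        rw [Pi.single_apply, ite_mul, one_mul, zero_mul])]
      rw [Finset.sum_ite_eq' Finset.univ a]
      simp
    rw [Finset.sum_sub_distrib, hsum k (fun i => ψ ((e l : Fin n → F × F)) i),
      hsum l (fun i => ψ ((e k : Fin n → F × F)) i), sub_eq_zero] at h
    rw [hΓ0]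
    exact h.symm
  -- the graph matrix
  set Γ : Matrix (Fin n) (Fin n) F := fun k i => if k = i then 0 else Γ0 k i with hΓ
  have hΓsum : ∀ (lam : Fin n → F) (i : Fin n),
      ∑ k, lam k * Γ k i = (∑ k, lam k * Γ0 k i) - lam i * Γ0 i i := by
    intro lam i
    have : ∀ k, lam k * Γ k i = lam k * Γ0 k i - (if k = i then lam i * Γ0 i i else 0) := by
      intro k
      by_cases h : k = i
      · subst h; simp [hΓ]
      · simp [hΓ, h]
    rw [Finset.sum_congr rfl fun k _ => this k, Finset.sum_sub_distrib,
      Finset.sum_ite_eq' Finset.univ i]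
    simp
  -- the symplectic matrices
  have hdet : ∀ i : Fin n,
      (!![if i ∈ s then -Γ0 i i else 1, if i ∈ s then -1 else -Γ0 i i;
          if i ∈ s then 1 else 0, if i ∈ s then 0 else 1] : Matrix (Fin 2) (Fin 2) F).det
        = 1 := by
    intro i
    by_cases h : i ∈ s <;> simp [Matrix.det_fin_two_of, h]
  set S : Fin n → Matrix.SpecialLinearGroup (Fin 2) F := fun i =>
    ⟨!![if i ∈ s then -Γ0 i i else 1, if i ∈ s then -1 else -Γ0 i i;
        if i ∈ s then 1 else 0, if i ∈ s then 0 else 1], hdet i⟩ with hS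
  have happ : ∀ (c : Fin n → F × F) (i : Fin n),
      sl2Apply (S i) (c i) = (ψ c i - Γ0 i i * φ c i, φ c i) := by
    intro c i
    rw [sl2Apply, hS]
    by_cases h : i ∈ s <;>
      simp [hφ, hψ, h, Matrix.cons_val_zero, Matrix.cons_val_one, Matrix.head_cons] <;>
      ring
  refine ⟨Equiv.refl (Fin n), S, Γ, ?_, ?_, ?_⟩
  · rw [Matrix.IsSymm]
    ext k i
    rw [Matrix.transpose_apply, hΓ]
    by_cases h : k = i
    · subst h; simp
    · simp only [h, if_neg, if_neg (Ne.symm h)]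
      exact (hΓ0symm k i).symm
  · intro i; simp [hΓ]
  · intro u
    have hinv : ∀ i : Fin n, (Equiv.refl (Fin n))⁻¹ i = i := fun i => rfl
    constructor
    · rintro ⟨c, hc, hu⟩
      refine ⟨fun i => φ c i, ?_⟩
      rw [← hu]
      funext i
      rw [hinv i, happ c i]
      have hψc : ψ c i = ∑ k, φ c k * Γ0 k i := hψrep ⟨c, hc⟩ i
      refine Prod.ext ?_ rfl
      show ψ c i - Γ0 i i * φ c i = ∑ k, φ c k * Γ k i
      rw [hΓsum (fun k => φ c k) i, hψc]
      ring
    · rintro ⟨lam, hu⟩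
      set cl : ↥C := ∑ k, lam k • e k with hcl
      have hfcl : f cl = lam := by
        rw [hcl, map_sum]
        funext i
        simp only [map_smul, he, Finset.sum_apply, Pi.smul_apply, Pi.single_apply, smul_eq_mul]
        rw [Finset.sum_congr rfl (fun k _ => by rw [mul_ite, mul_one, mul_zero]),
          Finset.sum_ite_eq Finset.univ i]
        simp
      have hφcl : φ (cl : Fin n → F × F) = lam := hfcl
      refine ⟨(cl : Fin n → F × F), cl.2, ?_⟩
      rw [hu]
      funext i
      rw [hinv i, happ _ i]
      have hψc : ψ (cl : Fin n → F × F) i = ∑ k, f cl k * Γ0 k i := hψrep cl i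
      refine Prod.ext ?_ ?_
      · show ψ (cl : Fin n → F × F) i - Γ0 i i * φ (cl : Fin n → F × F) i
            = ∑ k, lam k * Γ k i
        rw [hψc, hfcl, hφcl, hΓsum lam i]
        ring
      · show φ (cl : Fin n → F × F) i = lam i
        rw [hφcl]
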